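/- arXiv:2008.11765 — 4 statements merged into one kernel-verified Lean document; each statement's English description precedes it below -/
import Mathlib

section
/- Let k > 0 and μ ∈ (0,1), and let F_X denote the cumulative distribution function of the PGN(μ,k) distribution. Then for every x < 0, F_X(x) = ∫_{1/2}^{1} f_U(u) du − (1/Γ(k/2)) ∫_{1/2}^{1} γ(k/2, x²/(2cos²(πu))) f_U(u) du, and for every x ≥ 0, F_X(x) = ∫_{1/2}^{1} f_U(u) du + (1/Γ(k/2)) ∫_{0}^{1/2} γ(k/2, x²/(2cos²(πu))) f_U(u) du, where γ(s,t) = ∫_0^t y^{s−1} e^{−y} dy is the lower incomplete gamma function. -/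
open MeasureTheory Real Set

/-- Density of the chi-squared distribution with `k` degrees of freedom. -/
noncomputable def chiSqDensity (k : ℝ) (v : ℝ) : ℝ :=
  if 0 < v then v ^ (k / 2 - 1) * Real.exp (-v / 2) / ((2 : ℝ) ^ (k / 2) * Real.Gamma (k / 2))
  else 0

/-- The Beta function `B(a,b) = Γ(a)Γ(b)/Γ(a+b)`. -/
noncomputable def realBeta (a b : ℝ) : ℝ := Real.Gamma a * Real.Gamma b / Real.Gamma (a + b)

/-- Density of the Beta(2μ, 2(1-μ)) distribution. -/
noncomputable def betaDensity (μ : ℝ) (u : ℝ) : ℝ :=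
  if 0 < u ∧ u < 1 then
    u ^ (2 * μ - 1) * (1 - u) ^ (1 - 2 * μ) / realBeta (2 * μ) (2 * (1 - μ))
  else 0

/-- The chi-squared distribution with `k` degrees of freedom, as a measure on ℝ. -/
noncomputable def chiSqMeasure (k : ℝ) : Measure ℝ :=
  volume.withDensity (fun v => ENNReal.ofReal (chiSqDensity k v))

/-- The Beta(2μ, 2(1-μ)) distribution, as a measure on ℝ. -/
noncomputable def betaMeasure (μ : ℝ) : Measure ℝ :=
  volume.withDensity (fun u => ENNReal.ofReal (betaDensity μ u))

/-- The polar-generalized normal distribution PGN(μ, k): the pushforward of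
(chi-squared k) ⊗ (Beta(2μ, 2(1-μ))) under `(v, u) ↦ √v · cos (π u)`. -/
noncomputable def PGN (μ k : ℝ) : Measure ℝ :=
  Measure.map (fun p : ℝ × ℝ => Real.sqrt p.1 * Real.cos (π * p.2))
    ((chiSqMeasure k).prod (betaMeasure μ))

/-- Lower incomplete gamma function `γ(s, t) = ∫_0^t y^(s-1) e^(-y) dy`. -/
noncomputable def lowerIncGamma (s t : ℝ) : ℝ := ∫ y in (0:ℝ)..t, y ^ (s - 1) * Real.exp (-y)

section AuxLemmas

open intervalIntegral

lemma ae_ne_real (c : ℝ) : ∀ᵐ v : ℝ, v ≠ c := by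
  rw [ae_iff]
  simp only [ne_eq, not_not, setOf_eq_eq_singleton]
  exact measure_singleton c

lemma chiSq_eq_gamma (k : ℝ) : chiSqMeasure k = ProbabilityTheory.gammaMeasure (k/2) (1/2) := by
  unfold chiSqMeasure ProbabilityTheory.gammaMeasure
  refine withDensity_congr_ae ?_
  filter_upwards [ae_ne_real 0] with v hv
  rw [ProbabilityTheory.gammaPDF_eq, chiSqDensity]
  rcases lt_trichotomy v 0 with h | h | h
  · rw [if_neg (by linarith), if_neg (by linarith)]
  · exact absurd h hv
  · rw [if_pos h, if_pos h.le]
    congr 1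
    rw [Real.div_rpow (by norm_num) (by norm_num), Real.one_rpow]
    have h2 : -(1/2 * v) = -v/2 := by ring
    rw [h2]
    field_simp

lemma subst_lemma (s t : ℝ) (ht : 0 ≤ t) :
    ∫ v in (0:ℝ)..t, v ^ (s-1) * Real.exp (-v/2) = 2 ^ (s:ℝ) * lowerIncGamma s (t/2) := by
  have h2 : (0:ℝ) < 2 ^ (s-1) := Real.rpow_pos_of_pos two_pos _
  have key : ∫ v in (0:ℝ)..t, v ^ (s-1) * Real.exp (-v/2)
      = ∫ v in (0:ℝ)..t, (2:ℝ) ^ (s-1) * ((fun y => y ^ (s-1) * Real.exp (-y)) (v * (1/2))) := by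
    refine intervalIntegral.integral_congr (fun v hv => ?_)
    rw [uIcc_of_le ht] at hv
    simp only
    rw [show v * (1/2) = v / 2 by ring, Real.div_rpow hv.1 (by norm_num),
      show -(v/2) = -v/2 by ring]
    field_simp
  rw [key, intervalIntegral.integral_const_mul,
    intervalIntegral.integral_comp_mul_right (fun y => y ^ (s-1) * Real.exp (-y))
      (by norm_num : (1/2:ℝ) ≠ 0)]
  simp only [zero_mul, smul_eq_mul]
  rw [show t * (1/2) = t/2 by ring]
  unfold lowerIncGamma
  rw [show ((1:ℝ)/2)⁻¹ = 2 by norm_num, ← mul_assoc, ← Real.rpow_add_one (by norm_num) (s-1)]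
  ring_nf

lemma lowerIncGamma_nonneg (s t : ℝ) (ht : 0 ≤ t) : 0 ≤ lowerIncGamma s t := by
  refine intervalIntegral.integral_nonneg ht (fun y hy => ?_)
  have : (0:ℝ) ≤ y := hy.1
  positivity

lemma lowerIncGamma_le_Gamma (s t : ℝ) (hs : 0 < s) (ht : 0 ≤ t) :
    lowerIncGamma s t ≤ Real.Gamma s := by
  rw [Real.Gamma_eq_integral hs, lowerIncGamma, intervalIntegral.integral_of_le ht]
  have hc : ∀ y ∈ Ioc (0:ℝ) t, y ^ (s-1) * Real.exp (-y) = Real.exp (-y) * y ^ (s-1) :=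
    fun y _ => mul_comm _ _
  rw [setIntegral_congr_fun measurableSet_Ioc hc]
  refine setIntegral_mono_set (Real.GammaIntegral_convergent hs) ?_ ?_
  · filter_upwards [self_mem_ae_restrict measurableSet_Ioi] with y hy
    have hy2 : (0:ℝ) < y := hy
    positivity
  · exact HasSubset.Subset.eventuallyLE (fun y hy => hy.1)

lemma chiSq_prob (k : ℝ) (hk : 0 < k) : IsProbabilityMeasure (chiSqMeasure k) := by
  rw [chiSq_eq_gamma]
  exact ProbabilityTheory.isProbabilityMeasure_gammaMeasure (by positivity) (by norm_num)

lemma chiSq_Iic (k : ℝ) (hk : 0 < k) (c : ℝ) (hc : 0 ≤ c) :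
    chiSqMeasure k (Iic c) =
      ENNReal.ofReal (lowerIncGamma (k/2) (c/2) / Real.Gamma (k/2)) := by
  have hs : 0 < k/2 := by positivity
  have hΓ : 0 < Real.Gamma (k/2) := Real.Gamma_pos_of_pos hs
  rw [chiSq_eq_gamma, ProbabilityTheory.gammaMeasure, withDensity_apply _ measurableSet_Iic]
  rw [lintegral_Iic_eq_lintegral_Iio_add_Icc _ hc,
    ProbabilityTheory.lintegral_gammaPDF_of_nonpos le_rfl, zero_add,
    Measure.restrict_congr_set (Ioc_ae_eq_Icc (μ := volume) (a := (0:ℝ)) (b := c)).symm]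
  set f : ℝ → ℝ := fun v => (1/2:ℝ) ^ (k/2) / Real.Gamma (k/2) * (v ^ (k/2 - 1) * Real.exp (-v/2)) with hf
  have hcong : ∀ v ∈ Ioc (0:ℝ) c, ProbabilityTheory.gammaPDF (k/2) (1/2) v = ENNReal.ofReal (f v) := by
    intro v hv
    rw [ProbabilityTheory.gammaPDF_of_nonneg hv.1.le, hf]
    congr 1
    rw [mul_assoc]
    congr 2
    ring_nf
  rw [setLIntegral_congr_fun_ae measurableSet_Ioc (ae_of_all _ hcong)]
  have hint : IntegrableOn f (Ioc 0 c) volume := by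
    have h1 : IntervalIntegrable (fun v : ℝ => v ^ (k/2-1)) volume 0 c :=
      intervalIntegral.intervalIntegrable_rpow' (by linarith)
    have h2 : ContinuousOn (fun v : ℝ => Real.exp (-v/2)) (uIcc 0 c) := by fun_prop
    have h3 : IntervalIntegrable (fun v : ℝ => v ^ (k/2-1) * Real.exp (-v/2)) volume 0 c :=
      h1.mul_continuousOn h2
    exact (h3.const_mul _).1
  rw [← ofReal_integral_eq_lintegral_ofReal hint ?_]
  · rw [← intervalIntegral.integral_of_le hc, hf, intervalIntegral.integral_const_mul,
      subst_lemma _ _ hc]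
    congr 1
    rw [Real.div_rpow (by norm_num) (by norm_num), Real.one_rpow]
    have h2 : ((2:ℝ) ^ (k/2)) ≠ 0 := (Real.rpow_pos_of_pos two_pos _).ne'
    field_simp
  · filter_upwards [self_mem_ae_restrict measurableSet_Ioc] with v hv
    have hv1 : (0:ℝ) < v := hv.1
    have hv2 : (0:ℝ) < (1/2:ℝ) ^ (k/2) := Real.rpow_pos_of_pos (by norm_num) _
    rw [hf]
    positivity

lemma chiSq_null_singleton (k c : ℝ) : chiSqMeasure k {c} = 0 := by
  rw [chiSqMeasure, withDensity_apply _ (measurableSet_singleton c)]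
  exact setLIntegral_measure_zero _ _ (measure_singleton c)

lemma chiSq_Ici (k : ℝ) (hk : 0 < k) (c : ℝ) (hc : 0 ≤ c) :
    chiSqMeasure k (Ici c) =
      ENNReal.ofReal (1 - lowerIncGamma (k/2) (c/2) / Real.Gamma (k/2)) := by
  haveI := chiSq_prob k hk
  have hΓ : 0 < Real.Gamma (k/2) := Real.Gamma_pos_of_pos (by positivity)
  have h1 : chiSqMeasure k (Iio c) = chiSqMeasure k (Iic c) :=
    measure_congr (Iio_ae_eq_Iic' (chiSq_null_singleton k c))
  rw [← compl_Iio, measure_compl measurableSet_Iio (measure_ne_top _ _), measure_univ, h1,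
    chiSq_Iic k hk c hc, ← ENNReal.ofReal_one,
    ← ENNReal.ofReal_sub _ (div_nonneg (lowerIncGamma_nonneg _ _ (by linarith)) hΓ.le)]

end AuxLemmas
section BetaLemmas

lemma betaDensity_nonneg {μ : ℝ} (hμ0 : 0 < μ) (hμ1 : μ < 1) (u : ℝ) :
    0 ≤ betaDensity μ u := by
  rw [betaDensity]
  split_ifs with h
  · have hB : 0 < realBeta (2*μ) (2*(1-μ)) := by
      rw [realBeta]
      refine div_pos (mul_pos (Real.Gamma_pos_of_pos (by linarith))
        (Real.Gamma_pos_of_pos (by linarith))) ?_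
      rw [show 2*μ + 2*(1-μ) = 2 by ring]
      exact Real.Gamma_pos_of_pos two_pos
    have h1 : (0:ℝ) ≤ u ^ (2*μ-1) := Real.rpow_nonneg h.1.le _
    have h2 : (0:ℝ) ≤ (1-u) ^ (1-2*μ) := Real.rpow_nonneg (by linarith [h.2]) _
    positivity
  · exact le_rfl

lemma betaDensity_measurable (μ : ℝ) : Measurable (betaDensity μ) := by
  unfold betaDensity
  refine Measurable.ite ?_ ?_ measurable_const
  · exact (measurableSet_Ioo (a := (0:ℝ)) (b := 1))
  · fun_prop

lemma betaDensity_II_left {μ : ℝ} (hμ0 : 0 < μ) (hμ1 : μ < 1) :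
    IntervalIntegrable (betaDensity μ) volume 0 (1/2) := by
  constructor
  · have h1 : IntervalIntegrable (fun u : ℝ => u ^ (2*μ-1)) volume 0 (1/2) :=
      intervalIntegral.intervalIntegrable_rpow' (by linarith)
    have h2 : ContinuousOn (fun u : ℝ => (1-u) ^ (1-2*μ) / realBeta (2*μ) (2*(1-μ)))
        (uIcc 0 (1/2)) := by
      rw [uIcc_of_le (by norm_num)]
      refine ContinuousOn.div_const ?_ _
      refine ContinuousOn.rpow_const (by fun_prop) (fun v hv => Or.inl ?_)
      have := hv.2
      intro hcon
      have : v = (1:ℝ) := by linarith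
      linarith [hv.2, this]
    have h3 := (h1.mul_continuousOn h2).1
    refine h3.congr_fun (fun u hu => ?_) measurableSet_Ioc
    have hu1 : 0 < u := hu.1
    have hu2 : u < 1 := lt_of_le_of_lt hu.2 (by norm_num)
    simp only [betaDensity, if_pos (And.intro hu1 hu2)]
    ring
  · rw [Set.Ioc_eq_empty (by norm_num)]
    exact integrableOn_empty

lemma betaDensity_II_right {μ : ℝ} (hμ0 : 0 < μ) (hμ1 : μ < 1) :
    IntervalIntegrable (betaDensity μ) volume (1/2) 1 := by
  constructor
  · have h0 : IntervalIntegrable (fun y : ℝ => y ^ (1-2*μ)) volume 0 (1/2) :=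
      intervalIntegral.intervalIntegrable_rpow' (by linarith)
    have h1 : IntervalIntegrable (fun u : ℝ => (1-u) ^ (1-2*μ)) volume (1/2) 1 := by
      have := h0.comp_sub_left 1
      norm_num at this
      exact this.symm
    have h2 : ContinuousOn (fun u : ℝ => u ^ (2*μ-1) / realBeta (2*μ) (2*(1-μ)))
        (uIcc (1/2) 1) := by
      rw [uIcc_of_le (by norm_num)]
      refine ContinuousOn.div_const ?_ _
      refine ContinuousOn.rpow_const (by fun_prop) (fun v hv => Or.inl ?_)
      have := hv.1
      intro hcon
      rw [hcon] at this
      norm_num at this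
    have h3 := (h1.mul_continuousOn h2).1
    refine (h3.congr ?_)
    have hmem : ∀ᵐ u : ℝ ∂(volume.restrict (Ioc (1/2:ℝ) 1)), u ∈ Ioc (1/2:ℝ) 1 :=
      self_mem_ae_restrict measurableSet_Ioc
    have hne : ∀ᵐ u : ℝ ∂(volume.restrict (Ioc (1/2:ℝ) 1)), u ≠ 1 :=
      (ae_ne_real 1).filter_mono (MeasureTheory.ae_mono Measure.restrict_le_self)
    filter_upwards [hmem, hne] with u hu hu1
    have h1' : (0:ℝ) < u := lt_trans (by norm_num) hu.1
    have h2' : u < 1 := lt_of_le_of_ne hu.2 hu1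
    simp only [betaDensity, if_pos (And.intro h1' h2')]
    ring
  · rw [Set.Ioc_eq_empty (by norm_num)]
    exact integrableOn_empty

end BetaLemmas
set_option maxHeartbeats 3000000 in
theorem stmt0 (k μ : ℝ) (hk : 0 < k) (hμ : μ ∈ Set.Ioo (0:ℝ) 1) :
    (∀ x : ℝ, x < 0 →
      (PGN μ k (Set.Iic x)).toReal =
        (∫ u in (1/2 : ℝ)..1, betaDensity μ u) -
          (1 / Real.Gamma (k / 2)) *
            ∫ u in (1/2 : ℝ)..1,
              lowerIncGamma (k / 2) (x ^ 2 / (2 * Real.cos (π * u) ^ 2)) * betaDensity μ u) ∧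
    (∀ x : ℝ, 0 ≤ x →
      (PGN μ k (Set.Iic x)).toReal =
        (∫ u in (1/2 : ℝ)..1, betaDensity μ u) +
          (1 / Real.Gamma (k / 2)) *
            ∫ u in (0 : ℝ)..(1/2),
              lowerIncGamma (k / 2) (x ^ 2 / (2 * Real.cos (π * u) ^ 2)) * betaDensity μ u) := by
  obtain ⟨hμ0, hμ1⟩ := hμ
  have hs : 0 < k/2 := by positivity
  have hΓ : 0 < Real.Gamma (k/2) := Real.Gamma_pos_of_pos hs
  haveI hprob : IsProbabilityMeasure (chiSqMeasure k) := chiSq_prob k hk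
  have hβm : Measurable (betaDensity μ) := betaDensity_measurable μ
  have hβnn : ∀ u, 0 ≤ betaDensity μ u := betaDensity_nonneg hμ0 hμ1
  have hmapm : Measurable (fun p : ℝ × ℝ => Real.sqrt p.1 * Real.cos (π * p.2)) := by fun_prop
  have hγcont : Continuous (fun t => lowerIncGamma (k/2) t) := by
    have hii : ∀ a b : ℝ, IntervalIntegrable (fun y : ℝ => y ^ (k/2-1) * Real.exp (-y)) volume a b :=
      fun a b => (intervalIntegral.intervalIntegrable_rpow' (by linarith)).mul_continuousOn
        (by fun_prop)
    exact intervalIntegral.continuous_primitive hii 0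
  have hγcompx : ∀ x : ℝ, Measurable (fun u : ℝ =>
      lowerIncGamma (k/2) (x^2/(2*Real.cos (π*u)^2))) :=
    fun x => hγcont.measurable.comp (by fun_prop)
  have hγle1 : ∀ t : ℝ, 0 ≤ t → lowerIncGamma (k/2) t / Real.Gamma (k/2) ≤ 1 :=
    fun t ht => (div_le_one hΓ).2 (lowerIncGamma_le_Gamma _ _ hs ht)
  have hγnn : ∀ t : ℝ, 0 ≤ t → 0 ≤ lowerIncGamma (k/2) t / Real.Gamma (k/2) :=
    fun t ht => div_nonneg (lowerIncGamma_nonneg _ _ ht) hΓ.le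
  have hc2nn : ∀ x u : ℝ, 0 ≤ x^2/(2*Real.cos (π*u)^2) := fun x u => by positivity
  have rep : ∀ x : ℝ, PGN μ k (Set.Iic x)
      = ∫⁻ u : ℝ, ENNReal.ofReal (betaDensity μ u)
          * chiSqMeasure k {v : ℝ | Real.sqrt v * Real.cos (π * u) ≤ x} := by
    intro x
    have hS : MeasurableSet {p : ℝ × ℝ | Real.sqrt p.1 * Real.cos (π * p.2) ≤ x} :=
      hmapm measurableSet_Iic
    rw [PGN, Measure.map_apply hmapm measurableSet_Iic]
    have hpre : (fun p : ℝ × ℝ => Real.sqrt p.1 * Real.cos (π * p.2)) ⁻¹' (Set.Iic x)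
        = {p : ℝ × ℝ | Real.sqrt p.1 * Real.cos (π * p.2) ≤ x} := rfl
    haveI : SFinite (betaMeasure μ) := by unfold betaMeasure; infer_instance
    rw [hpre, Measure.prod_apply_symm hS, betaMeasure,
      lintegral_withDensity_eq_lintegral_mul _ hβm.ennreal_ofReal
        (measurable_measure_prodMk_right hS)]
    rfl
  constructor
  · -- case x < 0
    intro x hx
    set H : ℝ → ℝ := fun u => betaDensity μ u *
      (1 - lowerIncGamma (k/2) (x^2/(2*Real.cos (π*u)^2)) / Real.Gamma (k/2)) with hH
    have hHnn : ∀ u, 0 ≤ H u := fun u => mul_nonneg (hβnn u)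
      (by have := hγle1 _ (hc2nn x u); linarith)
    have hHle : ∀ u, H u ≤ betaDensity μ u := fun u => by
      have h1 := hγnn _ (hc2nn x u)
      calc H u ≤ betaDensity μ u * 1 := by
            rw [hH]; exact mul_le_mul_of_nonneg_left (by linarith) (hβnn u)
        _ = betaDensity μ u := mul_one _
    have hHm : Measurable H :=
      hβm.mul (measurable_const.sub ((hγcompx x).div_const _))
    have hae : ∀ᵐ u : ℝ, ENNReal.ofReal (betaDensity μ u)
        * chiSqMeasure k {v : ℝ | Real.sqrt v * Real.cos (π * u) ≤ x}
        = ENNReal.ofReal ((Set.Ioo (1/2:ℝ) 1).indicator H u) := by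
      filter_upwards [ae_ne_real (1/2)] with u hu
      by_cases h01 : 0 < u ∧ u < 1
      · rcases lt_or_gt_of_ne hu with h | h
        · -- u < 1/2 : cos positive, event empty
          have hcos : 0 < Real.cos (π*u) := by
            refine Real.cos_pos_of_mem_Ioo ⟨?_, ?_⟩
            · nlinarith [pi_pos, h01.1]
            · nlinarith [pi_pos]
          have hset : {v : ℝ | Real.sqrt v * Real.cos (π*u) ≤ x} = (∅ : Set ℝ) := by
            ext v
            simp only [Set.mem_setOf_eq, Set.mem_empty_iff_false, iff_false, not_le]
            nlinarith [Real.sqrt_nonneg v, mul_nonneg (Real.sqrt_nonneg v) hcos.le]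
          have hnm : u ∉ Set.Ioo (1/2:ℝ) 1 := fun hmem => absurd hmem.1 (by linarith)
          rw [hset, measure_empty, mul_zero, Set.indicator_of_notMem hnm, ENNReal.ofReal_zero]
        · -- 1/2 < u < 1 : cos negative
          have hπ1 : π/2 < π*u := by nlinarith [pi_pos]
          have hπ2 : π*u < π + π/2 := by nlinarith [pi_pos, h01.2]
          have hcos : Real.cos (π*u) < 0 := Real.cos_neg_of_pi_div_two_lt_of_lt hπ1 hπ2
          have hb : 0 < x / Real.cos (π*u) := div_pos_of_neg_of_neg hx hcos
          have hset : {v : ℝ | Real.sqrt v * Real.cos (π*u) ≤ x}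
              = Set.Ici (x^2 / Real.cos (π*u)^2) := by
            ext v
            simp only [Set.mem_setOf_eq, Set.mem_Ici]
            constructor
            · intro hle
              rw [← div_pow]
              exact (Real.le_sqrt' hb).1 ((div_le_iff_of_neg hcos).2 hle)
            · intro hge
              exact (div_le_iff_of_neg hcos).1 ((Real.le_sqrt' hb).2 (by rwa [div_pow]))
          rw [hset, chiSq_Ici k hk _ (by positivity),
            show x^2/Real.cos (π*u)^2/2 = x^2/(2*Real.cos (π*u)^2) by ring,
            Set.indicator_of_mem (Set.mem_Ioo.2 ⟨h, h01.2⟩) H, hH,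
            ← ENNReal.ofReal_mul (hβnn u)]
      · have hβ0 : betaDensity μ u = 0 := by rw [betaDensity, if_neg h01]
        have hG0 : (Set.Ioo (1/2:ℝ) 1).indicator H u = 0 := by
          by_cases hm : u ∈ Set.Ioo (1/2:ℝ) 1
          · exact absurd ⟨lt_trans (by norm_num) hm.1, hm.2⟩ h01
          · exact Set.indicator_of_notMem hm H
        rw [hβ0, hG0, ENNReal.ofReal_zero, zero_mul]
    rw [rep x, lintegral_congr_ae hae]
    have hβint : IntegrableOn (betaDensity μ) (Set.Ioo (1/2:ℝ) 1) volume :=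
      ((betaDensity_II_right hμ0 hμ1).1).mono_set Set.Ioo_subset_Ioc_self
    have hGint : Integrable ((Set.Ioo (1/2:ℝ) 1).indicator H) volume := by
      rw [integrable_indicator_iff measurableSet_Ioo]
      refine Integrable.mono hβint hHm.aestronglyMeasurable.restrict (ae_of_all _ (fun u => ?_))
      simp only [Real.norm_eq_abs]
      rw [abs_of_nonneg (hHnn u), abs_of_nonneg (hβnn u)]
      exact hHle u
    have hGnn : ∀ u, 0 ≤ (Set.Ioo (1/2:ℝ) 1).indicator H u :=
      fun u => Set.indicator_nonneg (fun v _ => hHnn v) u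
    rw [← ofReal_integral_eq_lintegral_ofReal hGint (ae_of_all _ hGnn),
      ENNReal.toReal_ofReal (integral_nonneg hGnn),
      integral_indicator measurableSet_Ioo,
      setIntegral_congr_set Ioo_ae_eq_Ioc,
      ← intervalIntegral.integral_of_le (by norm_num : (1/2:ℝ) ≤ 1)]
    have hIγβ : IntervalIntegrable (fun u : ℝ =>
        lowerIncGamma (k/2) (x^2/(2*Real.cos (π*u)^2)) * betaDensity μ u) volume (1/2) 1 := by
      refine ((betaDensity_II_right hμ0 hμ1).const_mul (Real.Gamma (k/2))).mono_fun
        ((hγcompx x).mul hβm).aestronglyMeasurable.restrict (ae_of_all _ (fun u => ?_))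
      have h1 : 0 ≤ lowerIncGamma (k/2) (x^2/(2*Real.cos (π*u)^2)) :=
        lowerIncGamma_nonneg _ _ (hc2nn x u)
      have h2 : lowerIncGamma (k/2) (x^2/(2*Real.cos (π*u)^2)) ≤ Real.Gamma (k/2) :=
        lowerIncGamma_le_Gamma _ _ hs (hc2nn x u)
      simp only [Real.norm_eq_abs]
      rw [abs_of_nonneg (mul_nonneg h1 (hβnn u)), abs_of_nonneg (mul_nonneg hΓ.le (hβnn u))]
      exact mul_le_mul_of_nonneg_right h2 (hβnn u)
    have hcongr : Set.EqOn H (fun u => betaDensity μ u - (1/Real.Gamma (k/2)) *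
        (lowerIncGamma (k/2) (x^2/(2*Real.cos (π*u)^2)) * betaDensity μ u))
        (Set.uIcc (1/2:ℝ) 1) := by
      intro u _
      rw [hH]
      field_simp
    rw [intervalIntegral.integral_congr hcongr,
      intervalIntegral.integral_sub (betaDensity_II_right hμ0 hμ1) (hIγβ.const_mul _),
      intervalIntegral.integral_const_mul]
  · -- case 0 ≤ x
    intro x hx
    set H : ℝ → ℝ := fun u => betaDensity μ u *
      (if u ≤ 1/2 then lowerIncGamma (k/2) (x^2/(2*Real.cos (π*u)^2)) / Real.Gamma (k/2) else 1)
      with hH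
    have hfac01 : ∀ u : ℝ, 0 ≤ (if u ≤ (1:ℝ)/2 then
        lowerIncGamma (k/2) (x^2/(2*Real.cos (π*u)^2)) / Real.Gamma (k/2) else 1) ∧
        (if u ≤ (1:ℝ)/2 then
        lowerIncGamma (k/2) (x^2/(2*Real.cos (π*u)^2)) / Real.Gamma (k/2) else 1) ≤ 1 := by
      intro u
      split_ifs
      · exact ⟨hγnn _ (hc2nn x u), hγle1 _ (hc2nn x u)⟩
      · exact ⟨zero_le_one, le_rfl⟩
    have hHnn : ∀ u, 0 ≤ H u := fun u => mul_nonneg (hβnn u) (hfac01 u).1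
    have hHle : ∀ u, H u ≤ betaDensity μ u := fun u => by
      calc H u ≤ betaDensity μ u * 1 :=
            mul_le_mul_of_nonneg_left (hfac01 u).2 (hβnn u)
        _ = betaDensity μ u := mul_one _
    have hHm : Measurable H := by
      refine hβm.mul (Measurable.ite ?_ ((hγcompx x).div_const _) measurable_const)
      exact measurableSet_Iic (a := (1/2:ℝ))
    have hae : ∀ᵐ u : ℝ, ENNReal.ofReal (betaDensity μ u)
        * chiSqMeasure k {v : ℝ | Real.sqrt v * Real.cos (π * u) ≤ x}
        = ENNReal.ofReal ((Set.Ioo (0:ℝ) 1).indicator H u) := by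
      filter_upwards [ae_ne_real (1/2)] with u hu
      by_cases h01 : 0 < u ∧ u < 1
      · rcases lt_or_gt_of_ne hu with h | h
        · -- u < 1/2 : cos positive
          have hcos : 0 < Real.cos (π*u) := by
            refine Real.cos_pos_of_mem_Ioo ⟨?_, ?_⟩
            · nlinarith [pi_pos, h01.1]
            · nlinarith [pi_pos]
          have hbnn : 0 ≤ x / Real.cos (π*u) := div_nonneg hx hcos.le
          have hset : {v : ℝ | Real.sqrt v * Real.cos (π*u) ≤ x}
              = Set.Iic (x^2 / Real.cos (π*u)^2) := by
            ext v
            simp only [Set.mem_setOf_eq, Set.mem_Iic]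
            constructor
            · intro hle
              rw [← div_pow]
              exact (Real.sqrt_le_iff.1 ((le_div_iff₀ hcos).2 hle)).2
            · intro hge
              exact (le_div_iff₀ hcos).1 (Real.sqrt_le_iff.2 ⟨hbnn, by rwa [div_pow]⟩)
          rw [hset, chiSq_Iic k hk _ (by positivity),
            show x^2/Real.cos (π*u)^2/2 = x^2/(2*Real.cos (π*u)^2) by ring,
            Set.indicator_of_mem (Set.mem_Ioo.2 h01) H, hH]
          simp only [if_pos h.le]
          rw [← ENNReal.ofReal_mul (hβnn u)]
        · -- 1/2 < u < 1 : cos negative, event is everything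
          have hπ1 : π/2 < π*u := by nlinarith [pi_pos]
          have hπ2 : π*u < π + π/2 := by nlinarith [pi_pos, h01.2]
          have hcos : Real.cos (π*u) < 0 := Real.cos_neg_of_pi_div_two_lt_of_lt hπ1 hπ2
          have hset : {v : ℝ | Real.sqrt v * Real.cos (π*u) ≤ x} = (Set.univ : Set ℝ) := by
            refine Set.eq_univ_iff_forall.2 (fun v => ?_)
            have h1 : Real.sqrt v * Real.cos (π*u) ≤ 0 :=
              mul_nonpos_iff.2 (Or.inl ⟨Real.sqrt_nonneg v, hcos.le⟩)
            exact le_trans h1 hx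
          rw [hset, measure_univ, mul_one,
            Set.indicator_of_mem (Set.mem_Ioo.2 h01) H, hH]
          simp only [if_neg (not_le.2 h), mul_one]
      · have hβ0 : betaDensity μ u = 0 := by rw [betaDensity, if_neg h01]
        have hG0 : (Set.Ioo (0:ℝ) 1).indicator H u = 0 := by
          by_cases hm : u ∈ Set.Ioo (0:ℝ) 1
          · exact absurd ⟨hm.1, hm.2⟩ h01
          · exact Set.indicator_of_notMem hm H
        rw [hβ0, hG0, ENNReal.ofReal_zero, zero_mul]
    rw [rep x, lintegral_congr_ae hae]
    have hβII : IntervalIntegrable (betaDensity μ) volume 0 1 :=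
      (betaDensity_II_left hμ0 hμ1).trans (betaDensity_II_right hμ0 hμ1)
    have hβint : IntegrableOn (betaDensity μ) (Set.Ioo (0:ℝ) 1) volume :=
      hβII.1.mono_set Set.Ioo_subset_Ioc_self
    have hGint : Integrable ((Set.Ioo (0:ℝ) 1).indicator H) volume := by
      rw [integrable_indicator_iff measurableSet_Ioo]
      refine Integrable.mono hβint hHm.aestronglyMeasurable.restrict (ae_of_all _ (fun u => ?_))
      simp only [Real.norm_eq_abs]
      rw [abs_of_nonneg (hHnn u), abs_of_nonneg (hβnn u)]
      exact hHle u
    have hGnn : ∀ u, 0 ≤ (Set.Ioo (0:ℝ) 1).indicator H u :=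
      fun u => Set.indicator_nonneg (fun v _ => hHnn v) u
    rw [← ofReal_integral_eq_lintegral_ofReal hGint (ae_of_all _ hGnn),
      ENNReal.toReal_ofReal (integral_nonneg hGnn),
      integral_indicator measurableSet_Ioo,
      setIntegral_congr_set Ioo_ae_eq_Ioc,
      ← intervalIntegral.integral_of_le (by norm_num : (0:ℝ) ≤ 1)]
    have hHII : ∀ a b : ℝ, IntervalIntegrable (betaDensity μ) volume a b →
        IntervalIntegrable H volume a b := by
      intro a b hab
      refine hab.mono_fun hHm.aestronglyMeasurable.restrict (ae_of_all _ (fun u => ?_))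
      simp only [Real.norm_eq_abs]
      rw [abs_of_nonneg (hHnn u), abs_of_nonneg (hβnn u)]
      exact hHle u
    rw [← intervalIntegral.integral_add_adjacent_intervals
      (hHII 0 (1/2) (betaDensity_II_left hμ0 hμ1)) (hHII (1/2) 1 (betaDensity_II_right hμ0 hμ1))]
    have e1 : ∫ u in (0:ℝ)..(1/2), H u = (1/Real.Gamma (k/2)) *
        ∫ u in (0:ℝ)..(1/2),
          lowerIncGamma (k/2) (x^2/(2*Real.cos (π*u)^2)) * betaDensity μ u := by
      have hcongr : Set.EqOn H (fun u => (1/Real.Gamma (k/2)) *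
          (lowerIncGamma (k/2) (x^2/(2*Real.cos (π*u)^2)) * betaDensity μ u))
          (Set.uIcc (0:ℝ) (1/2)) := by
        intro u humem
        rw [Set.uIcc_of_le (by norm_num : (0:ℝ) ≤ 1/2)] at humem
        rw [hH]
        simp only [if_pos humem.2]
        ring
      rw [intervalIntegral.integral_congr hcongr, intervalIntegral.integral_const_mul]
    have e2 : ∫ u in (1/2:ℝ)..1, H u = ∫ u in (1/2:ℝ)..1, betaDensity μ u := by
      rw [intervalIntegral.integral_of_le (by norm_num : (1/2:ℝ) ≤ 1),
        intervalIntegral.integral_of_le (by norm_num : (1/2:ℝ) ≤ 1)]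
      refine setIntegral_congr_fun measurableSet_Ioc (fun u humem => ?_)
      rw [hH]
      simp only [if_neg (not_le.2 humem.1), mul_one]
    rw [e1, e2]
    ring
end

section
/- The PGN(1/2, 2) distribution equals the standard normal distribution N(0,1) on ℝ. Equivalently, if V has the chi-squared distribution with 2 degrees of freedom, U is uniformly distributed on (0,1), and V and U are independent, then √V · cos(πU) has the standard normal distribution. -/
open MeasureTheory Real Set

open scoped ENNReal
open scoped ENNReal

theorem lintegral_image_eq_lintegral_abs_deriv_mul' {s : Set ℝ} {f : ℝ → ℝ} {f' : ℝ → ℝ}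
    (hs : MeasurableSet s) (hf' : ∀ x ∈ s, HasDerivWithinAt f (f' x) s x)
    (hf : InjOn f s) (g : ℝ → ℝ≥0∞) :
    ∫⁻ x in f '' s, g x = ∫⁻ x in s, ENNReal.ofReal |f' x| * g (f x) := by
  simpa only [ContinuousLinearMap.det_toSpanSingleton] using
    lintegral_image_eq_lintegral_abs_det_fderiv_mul volume hs
      (fun x hx => (hf' x hx).hasFDerivWithinAt) hf g

lemma arccos_lt_pi' {t : ℝ} (h : -1 < t) : Real.arccos t < π := by
  rw [Real.arccos]
  have := Real.neg_pi_div_two_lt_arcsin.2 h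
  linarith

lemma cos_image : (fun u : ℝ => Real.cos (π * u)) '' Ioo 0 1 = Ioo (-1) 1 := by
  ext t
  constructor
  · rintro ⟨u, ⟨hu0, hu1⟩, rfl⟩
    have h1 : (0:ℝ) < π * u := by positivity
    have h2 : π * u < π := by nlinarith [pi_pos]
    constructor
    · have := Real.strictAntiOn_cos ⟨le_of_lt h1, le_of_lt h2⟩ ⟨le_of_lt pi_pos, le_refl π⟩ h2
      simpa [Real.cos_pi] using this
    · have := Real.strictAntiOn_cos ⟨le_refl (0:ℝ), le_of_lt pi_pos⟩ ⟨le_of_lt h1, le_of_lt h2⟩ h1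
      simpa [Real.cos_zero] using this
  · rintro ⟨h1, h2⟩
    refine ⟨Real.arccos t / π, ⟨?_, ?_⟩, ?_⟩
    · exact div_pos (Real.arccos_pos.2 h2) pi_pos
    · rw [div_lt_one pi_pos]; exact arccos_lt_pi' h1
    · show Real.cos (π * (Real.arccos t / π)) = t
      rw [mul_div_cancel₀ _ (ne_of_gt pi_pos)]
      exact Real.cos_arccos (le_of_lt h1) (le_of_lt h2)

lemma cos_injOn : InjOn (fun u : ℝ => Real.cos (π * u)) (Ioo 0 1) := by
  have h : StrictAntiOn (fun u : ℝ => Real.cos (π * u)) (Icc 0 1) := by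
    intro a ha b hb hab
    exact Real.strictAntiOn_cos ⟨mul_nonneg pi_pos.le ha.1, by nlinarith [pi_pos, ha.2]⟩
      ⟨mul_nonneg pi_pos.le hb.1, by nlinarith [pi_pos, hb.2]⟩ (by nlinarith [pi_pos])
  exact (h.injOn).mono Ioo_subset_Icc_self

lemma cos_hasDeriv {u : ℝ} : HasDerivAt (fun u : ℝ => Real.cos (π * u)) (-(π * Real.sin (π * u))) u := by
  have h1 : HasDerivAt (fun u : ℝ => π * u) π u := by
    simpa using (hasDerivAt_id u).const_mul π
  have := (Real.hasDerivAt_cos (π * u)).comp u h1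
  rw [show -(π * Real.sin (π * u)) = -Real.sin (π * u) * π by ring]
  exact this

noncomputable def arcDens (t : ℝ) : ℝ := if t^2 < 1 then (π * Real.sqrt (1 - t^2))⁻¹ else 0

lemma cos_measurable : Measurable (fun u : ℝ => Real.cos (π * u)) :=
  (Real.continuous_cos.comp (continuous_const.mul continuous_id)).measurable

lemma arcDens_measurable : Measurable arcDens := by
  have hset : MeasurableSet {t : ℝ | t^2 < 1} :=
    measurableSet_lt (measurable_id.pow_const 2) measurable_const
  exact Measurable.ite hset
    ((measurable_const.mul ((measurable_const.sub (measurable_id.pow_const 2)).sqrt)).inv)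
    measurable_const

lemma map_cos_uniform :
    Measure.map (fun u : ℝ => Real.cos (π * u)) (volume.restrict (Ioo 0 1)) =
      volume.withDensity (fun t => ENNReal.ofReal (arcDens t)) := by
  set c : ℝ → ℝ := fun u => Real.cos (π * u) with hc
  ext s hs
  rw [Measure.map_apply cos_measurable hs, withDensity_apply _ hs]
  have key := lintegral_image_eq_lintegral_abs_deriv_mul'
    (f := c) (f' := fun u => -(π * Real.sin (π * u))) measurableSet_Ioo
    (fun u _ => cos_hasDeriv.hasDerivWithinAt) cos_injOn
    (fun t => s.indicator 1 t * ENNReal.ofReal (arcDens t))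
  rw [show c '' Ioo 0 1 = Ioo (-1) 1 from cos_image] at key
  have hL : ∫⁻ t in s, ENNReal.ofReal (arcDens t) =
      ∫⁻ t in Ioo (-1:ℝ) 1, s.indicator 1 t * ENNReal.ofReal (arcDens t) := by
    rw [← lintegral_indicator hs, ← lintegral_indicator measurableSet_Ioo]
    apply lintegral_congr
    intro t
    by_cases ht : t ∈ Ioo (-1:ℝ) 1
    · by_cases hts : t ∈ s <;>
        simp [Set.indicator_apply, ht, hts]
    · have h0 : arcDens t = 0 := by
        have : ¬ (t^2 < 1) := by
          rw [sq_lt_one_iff_abs_lt_one, abs_lt]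
          simpa [mem_Ioo] using ht
        simp [arcDens, this]
      by_cases hts : t ∈ s <;>
        simp [Set.indicator_apply, ht, hts, h0]
  have hR : ∫⁻ u in Ioo (0:ℝ) 1,
      ENNReal.ofReal |(-(π * Real.sin (π * u)))| * (s.indicator 1 (c u) * ENNReal.ofReal (arcDens (c u)))
      = volume (c ⁻¹' s ∩ Ioo 0 1) := by
    rw [← Measure.restrict_apply' measurableSet_Ioo,
        ← lintegral_indicator_one (hs.preimage cos_measurable)]
    apply setLIntegral_congr_fun measurableSet_Ioo
    intro u hu
    beta_reduce
    obtain ⟨hu0, hu1⟩ := hu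
    have hsin : 0 < Real.sin (π * u) :=
      Real.sin_pos_of_pos_of_lt_pi (by positivity) (by nlinarith [pi_pos])
    have hcos : (c u)^2 < 1 := by
      rw [sq_lt_one_iff_abs_lt_one, abs_lt]
      have : c u ∈ Ioo (-1:ℝ) 1 := cos_image ▸ ⟨u, ⟨hu0, hu1⟩, rfl⟩
      exact this
    have h1 : arcDens (c u) = (π * Real.sin (π * u))⁻¹ := by
      rw [arcDens, if_pos hcos]
      congr 1
      congr 1
      rw [show 1 - c u ^ 2 = Real.sin (π * u) ^ 2 by
        have := Real.sin_sq_add_cos_sq (π * u); simp only [hc]; linarith]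
      exact Real.sqrt_sq hsin.le
    have h2 : |(-(π * Real.sin (π * u)))| = π * Real.sin (π * u) := by
      rw [abs_neg, abs_of_pos (by positivity)]
    rw [h1, h2, mul_left_comm, ← ENNReal.ofReal_mul (by positivity),
        mul_inv_cancel₀ (by positivity), ENNReal.ofReal_one, mul_one]
    by_cases hmem : c u ∈ s <;> simp only [hc] at hmem <;> simp [Set.indicator_apply, hmem, mem_preimage, hc]
  rw [hL, key, hR, Measure.restrict_apply (hs.preimage cos_measurable)]

lemma map_smul_arc {v : ℝ} (hv : 0 < v) :
    Measure.map (fun t : ℝ => Real.sqrt v * t)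
        (volume.withDensity (fun t => ENNReal.ofReal (arcDens t))) =
      volume.withDensity
        (fun x => ENNReal.ofReal (if x^2 < v then (π * Real.sqrt (v - x^2))⁻¹ else 0)) := by
  have hsv : 0 < Real.sqrt v := Real.sqrt_pos.2 hv
  ext s hs
  rw [Measure.map_apply (measurable_const_mul _) hs, withDensity_apply _ hs,
      withDensity_apply _ (hs.preimage (measurable_const_mul _))]
  have key := lintegral_image_eq_lintegral_abs_deriv_mul'
    (f := fun t : ℝ => Real.sqrt v * t) (f' := fun _ => Real.sqrt v) MeasurableSet.univ
    (fun t _ => HasDerivAt.hasDerivWithinAt (by simpa using (hasDerivAt_id t).const_mul (Real.sqrt v)))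
    ((mul_right_injective₀ hsv.ne').injOn)
    (s.indicator (fun x => ENNReal.ofReal (if x^2 < v then (π * Real.sqrt (v - x^2))⁻¹ else 0)))
  rw [Set.image_univ,
    Set.range_eq_univ.2 (fun x => ⟨x / Real.sqrt v, by field_simp⟩)] at key
  have hpt : ∀ t : ℝ, ENNReal.ofReal (Real.sqrt v) *
      ENNReal.ofReal (if (Real.sqrt v * t)^2 < v then (π * Real.sqrt (v - (Real.sqrt v * t)^2))⁻¹ else 0)
      = ENNReal.ofReal (arcDens t) := by
    intro t
    have hsq : (Real.sqrt v * t)^2 = v * t^2 := by rw [mul_pow, Real.sq_sqrt hv.le]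
    rw [hsq, arcDens]
    by_cases ht : t^2 < 1
    · rw [if_pos (by nlinarith), if_pos ht, ← ENNReal.ofReal_mul hsv.le]
      congr 1
      have h1 : v - v * t^2 = v * (1 - t^2) := by ring
      rw [h1, Real.sqrt_mul hv.le]
      have h2 : π * (Real.sqrt v * Real.sqrt (1 - t^2)) =
          Real.sqrt v * (π * Real.sqrt (1 - t^2)) := by ring
      rw [h2, mul_inv, ← mul_assoc, mul_inv_cancel₀ hsv.ne', one_mul]
    · have : ¬ (v * t^2 < v) := by nlinarith
      rw [if_neg this, if_neg ht, ENNReal.ofReal_zero, mul_zero]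
  calc ∫⁻ t in (fun t : ℝ => Real.sqrt v * t) ⁻¹' s, ENNReal.ofReal (arcDens t)
      = ∫⁻ t, ((fun t : ℝ => Real.sqrt v * t) ⁻¹' s).indicator
          (fun t => ENNReal.ofReal (arcDens t)) t := by
        rw [lintegral_indicator (hs.preimage (measurable_const_mul _))]
    _ = ∫⁻ t in univ, ENNReal.ofReal |Real.sqrt v| *
          (s.indicator (fun x => ENNReal.ofReal (if x^2 < v then (π * Real.sqrt (v - x^2))⁻¹ else 0))
            ((fun t : ℝ => Real.sqrt v * t) t)) := by
        rw [Measure.restrict_univ]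
        apply lintegral_congr
        intro t
        rw [abs_of_pos hsv]
        by_cases hmem : Real.sqrt v * t ∈ s
        · rw [Set.indicator_of_mem (mem_preimage.2 hmem),
              Set.indicator_of_mem hmem]
          exact (hpt t).symm
        · simp [Set.indicator_apply, mem_preimage, hmem]
    _ = ∫⁻ x in univ, s.indicator
          (fun x => ENNReal.ofReal (if x^2 < v then (π * Real.sqrt (v - x^2))⁻¹ else 0)) x := key.symm
    _ = ∫⁻ x in s, ENNReal.ofReal (if x^2 < v then (π * Real.sqrt (v - x^2))⁻¹ else 0) := by
        rw [Measure.restrict_univ, lintegral_indicator hs]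

lemma gamma_half_lintegral :
    ∫⁻ y in Ioi (0:ℝ), ENNReal.ofReal (Real.exp (-y) * y ^ ((1/2 : ℝ) - 1))
      = ENNReal.ofReal (Real.sqrt π) := by
  have hint := Real.GammaIntegral_convergent (by norm_num : (0:ℝ) < 1/2)
  have hnn : 0 ≤ᵐ[volume.restrict (Ioi (0:ℝ))] fun y => Real.exp (-y) * y ^ ((1/2 : ℝ) - 1) := by
    rw [Filter.EventuallyLE, ae_restrict_iff' measurableSet_Ioi]
    filter_upwards with y hy
    have : (0:ℝ) < y := hy
    positivity
  rw [← ofReal_integral_eq_lintegral_ofReal hint hnn,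
      ← Real.Gamma_eq_integral (by norm_num : (0:ℝ) < 1/2), Real.Gamma_one_half_eq]

lemma exp_sqrt_lintegral :
    ∫⁻ w in Ioi (0:ℝ), ENNReal.ofReal (Real.exp (-w/2)/2 * (π * Real.sqrt w)⁻¹)
      = ENNReal.ofReal ((Real.sqrt (2*π))⁻¹) := by
  have himg : (fun y : ℝ => 2 * y) '' Ioi 0 = Ioi 0 := by
    ext z
    constructor
    · rintro ⟨y, hy, rfl⟩
      have : (0:ℝ) < y := hy
      exact mem_Ioi.2 (by positivity)
    · intro hz
      exact ⟨z/2, mem_Ioi.2 (by linarith [mem_Ioi.1 hz]), by ring⟩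
  have key := lintegral_image_eq_lintegral_abs_deriv_mul'
    (s := Ioi (0:ℝ)) (f := fun y : ℝ => 2 * y) (f' := fun _ => (2:ℝ)) measurableSet_Ioi
    (fun y _ => HasDerivAt.hasDerivWithinAt (by simpa using (hasDerivAt_id y).const_mul (2:ℝ)))
    ((mul_right_injective₀ (by norm_num : (2:ℝ) ≠ 0)).injOn)
    (fun w => ENNReal.ofReal (Real.exp (-w/2)/2 * (π * Real.sqrt w)⁻¹))
  rw [himg] at key
  rw [key]
  have hcong : ∫⁻ y in Ioi (0:ℝ), ENNReal.ofReal |(2:ℝ)| *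
      ENNReal.ofReal (Real.exp (-(2*y)/2)/2 * (π * Real.sqrt (2*y))⁻¹)
      = ∫⁻ y in Ioi (0:ℝ), ENNReal.ofReal ((π * Real.sqrt 2)⁻¹) *
          ENNReal.ofReal (Real.exp (-y) * y ^ ((1/2 : ℝ) - 1)) := by
    apply setLIntegral_congr_fun measurableSet_Ioi
    intro y hy
    beta_reduce
    have hy0 : (0:ℝ) < y := hy
    rw [← ENNReal.ofReal_mul (by positivity), ← ENNReal.ofReal_mul (by positivity)]
    congr 1
    have h1 : Real.sqrt (2*y) = Real.sqrt 2 * Real.sqrt y := Real.sqrt_mul (by norm_num) y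
    have h2 : -(2*y)/2 = -y := by ring
    have h3 : y ^ ((1/2 : ℝ) - 1) = (Real.sqrt y)⁻¹ := by
      rw [show (1/2 : ℝ) - 1 = -(1/2) by norm_num, Real.rpow_neg hy0.le,
          Real.sqrt_eq_rpow]
    rw [h1, h2, h3, abs_of_pos (by norm_num : (0:ℝ) < 2)]
    have hsy : (0:ℝ) < Real.sqrt y := Real.sqrt_pos.2 hy0
    have hs2 : (0:ℝ) < Real.sqrt 2 := by positivity
    field_simp
  rw [hcong, lintegral_const_mul' _ _ ENNReal.ofReal_ne_top, gamma_half_lintegral,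
      ← ENNReal.ofReal_mul (by positivity)]
  congr 1
  rw [Real.sqrt_mul (by norm_num : (0:ℝ) ≤ 2) π]
  have hsp : (0:ℝ) < Real.sqrt π := Real.sqrt_pos.2 pi_pos
  have hs2 : (0:ℝ) < Real.sqrt 2 := by positivity
  field_simp
  nlinarith [Real.mul_self_sqrt pi_pos.le]

lemma mix_integral (x : ℝ) :
    ∫⁻ v, ENNReal.ofReal (if x^2 < v then Real.exp (-v/2)/2 * (π * Real.sqrt (v - x^2))⁻¹ else 0)
      = ENNReal.ofReal (Real.exp (-(x^2)/2) / Real.sqrt (2*π)) := by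
  have h1 : (fun v => ENNReal.ofReal
        (if x^2 < v then Real.exp (-v/2)/2 * (π * Real.sqrt (v - x^2))⁻¹ else 0))
      = (Ioi (x^2)).indicator
          (fun v => ENNReal.ofReal (Real.exp (-v/2)/2 * (π * Real.sqrt (v - x^2))⁻¹)) := by
    funext v
    by_cases hv : x^2 < v <;> simp [Set.indicator_apply, mem_Ioi, hv]
  rw [h1, lintegral_indicator measurableSet_Ioi]
  have himg : (fun w : ℝ => w + x^2) '' Ioi 0 = Ioi (x^2) := by
    rw [image_add_const_Ioi, zero_add]
  have key := lintegral_image_eq_lintegral_abs_deriv_mul'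
    (s := Ioi (0:ℝ)) (f := fun w : ℝ => w + x^2) (f' := fun _ => (1:ℝ)) measurableSet_Ioi
    (fun w _ => HasDerivAt.hasDerivWithinAt (by simpa using (hasDerivAt_id w).add_const (x^2)))
    ((add_left_injective (x^2)).injOn)
    (fun v => ENNReal.ofReal (Real.exp (-v/2)/2 * (π * Real.sqrt (v - x^2))⁻¹))
  rw [himg] at key
  rw [key]
  have hcong : ∫⁻ w in Ioi (0:ℝ), ENNReal.ofReal |(1:ℝ)| *
      ENNReal.ofReal (Real.exp (-(w + x^2)/2)/2 * (π * Real.sqrt (w + x^2 - x^2))⁻¹)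
      = ∫⁻ w in Ioi (0:ℝ), ENNReal.ofReal (Real.exp (-(x^2)/2)) *
          ENNReal.ofReal (Real.exp (-w/2)/2 * (π * Real.sqrt w)⁻¹) := by
    apply setLIntegral_congr_fun measurableSet_Ioi
    intro w hw
    beta_reduce
    rw [abs_one, ENNReal.ofReal_one, one_mul, ← ENNReal.ofReal_mul (by positivity)]
    congr 1
    have h2 : w + x^2 - x^2 = w := by ring
    have h3 : Real.exp (-(w + x^2)/2) = Real.exp (-(x^2)/2) * Real.exp (-w/2) := by
      rw [← Real.exp_add]; ring_nf
    rw [h2, h3]; ring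
  rw [hcong, lintegral_const_mul' _ _ ENNReal.ofReal_ne_top, exp_sqrt_lintegral,
      ← ENNReal.ofReal_mul (by positivity), ← div_eq_mul_inv]

lemma beta_half_eq : betaMeasure (1/2) = volume.restrict (Ioo 0 1) := by
  have h : (fun u => ENNReal.ofReal (betaDensity (1/2) u)) = (Ioo (0:ℝ) 1).indicator 1 := by
    funext u
    rw [betaDensity]
    by_cases hu : 0 < u ∧ u < 1
    · rw [if_pos hu]
      have hB : realBeta (2 * (1/2)) (2 * (1 - 1/2)) = 1 := by
        norm_num [realBeta, Real.Gamma_one, Real.Gamma_two]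
      rw [hB]
      norm_num [Set.indicator_apply, mem_Ioo, hu.1, hu.2, Real.rpow_zero]
    · rw [if_neg hu]
      have : u ∉ Ioo (0:ℝ) 1 := by simpa [mem_Ioo] using hu
      simp [Set.indicator_apply, this]
  rw [betaMeasure, h, withDensity_indicator_one measurableSet_Ioo]

lemma chiSq_two_eq : chiSqMeasure 2 =
    volume.withDensity (fun v => ENNReal.ofReal (if 0 < v then Real.exp (-v/2)/2 else 0)) := by
  rw [chiSqMeasure]
  congr 1
  funext v
  rw [chiSqDensity]
  by_cases hv : 0 < v
  · rw [if_pos hv, if_pos hv]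
    norm_num [Real.Gamma_one, Real.rpow_one, Real.rpow_zero]
  · rw [if_neg hv, if_neg hv]

theorem stmt5 :
    PGN (1/2) 2 =
      volume.withDensity (fun x : ℝ =>
        ENNReal.ofReal (Real.exp (-(x ^ 2) / 2) / Real.sqrt (2 * π))) := by
  have hm : Measurable (fun p : ℝ × ℝ => Real.sqrt p.1 * p.2) :=
    ((measurable_fst (α := ℝ) (β := ℝ)).sqrt).mul measurable_snd
  have hpm : Measurable (Prod.map (id : ℝ → ℝ) (fun u : ℝ => Real.cos (π * u))) :=
    measurable_id.prodMap cos_measurable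
  haveI : SigmaFinite (chiSqMeasure 2) := SigmaFinite.withDensity_ofReal _
  haveI : SigmaFinite (betaMeasure (1/2)) := SigmaFinite.withDensity_ofReal _
  haveI : SigmaFinite (volume.withDensity fun t => ENNReal.ofReal (arcDens t)) :=
    SigmaFinite.withDensity_ofReal _
  have hmap : PGN (1/2) 2 = Measure.map (fun p : ℝ × ℝ => Real.sqrt p.1 * p.2)
      ((chiSqMeasure 2).prod (volume.withDensity fun t => ENNReal.ofReal (arcDens t))) := by
    rw [← map_cos_uniform, ← beta_half_eq,
        ← Measure.map_id (μ := chiSqMeasure 2),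
        Measure.map_prod_map _ _ measurable_id cos_measurable,
        Measure.map_map hm hpm]
    rfl
  rw [hmap]
  ext s hs
  rw [Measure.map_apply hm hs, withDensity_apply _ hs, Measure.prod_apply (hm hs)]
  set A := (fun p : ℝ × ℝ => Real.sqrt p.1 * p.2) ⁻¹' s with hA
  have hchi : Measurable fun v : ℝ => ENNReal.ofReal (if 0 < v then Real.exp (-v/2)/2 else 0) :=
    ENNReal.measurable_ofReal.comp
      (Measurable.ite measurableSet_Ioi
        ((measurable_id.neg.div_const 2).exp.div_const 2) measurable_const)
  have hGmeas : Measurable (fun v : ℝ =>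
      (volume.withDensity fun t => ENNReal.ofReal (arcDens t)) (Prod.mk v ⁻¹' A)) :=
    measurable_measure_prodMk_left (hm hs)
  rw [chiSq_two_eq, lintegral_withDensity_eq_lintegral_mul volume hchi hGmeas]
  simp only [Pi.mul_apply]
  have hstep : ∫⁻ v, ENNReal.ofReal (if 0 < v then Real.exp (-v/2)/2 else 0) *
        (volume.withDensity fun t => ENNReal.ofReal (arcDens t)) (Prod.mk v ⁻¹' A)
      = ∫⁻ v, ∫⁻ x in s, ENNReal.ofReal
          (if x^2 < v then Real.exp (-v/2)/2 * (π * Real.sqrt (v - x^2))⁻¹ else 0) := by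
    apply lintegral_congr
    intro v
    by_cases hv : 0 < v
    · have hsec : Prod.mk v ⁻¹' A = (fun t : ℝ => Real.sqrt v * t) ⁻¹' s := rfl
      rw [hsec, ← Measure.map_apply (measurable_const_mul _) hs, map_smul_arc hv,
          withDensity_apply _ hs, if_pos hv,
          ← lintegral_const_mul' _ _ ENNReal.ofReal_ne_top]
      apply lintegral_congr
      intro x
      rw [← ENNReal.ofReal_mul (by positivity)]
      congr 1
      by_cases hx : x^2 < v
      · rw [if_pos hx, if_pos hx]
      · rw [if_neg hx, if_neg hx, mul_zero]
    · rw [if_neg hv, ENNReal.ofReal_zero, zero_mul]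
      have hzero : ∀ x : ℝ, ENNReal.ofReal
          (if x^2 < v then Real.exp (-v/2)/2 * (π * Real.sqrt (v - x^2))⁻¹ else 0) = 0 := by
        intro x
        rw [if_neg (fun hx => hv (lt_of_le_of_lt (sq_nonneg x) hx)), ENNReal.ofReal_zero]
      simp only [hzero, lintegral_zero]
  rw [hstep]
  have hmeasU : Measurable (fun p : ℝ × ℝ => ENNReal.ofReal
      (if p.2^2 < p.1 then Real.exp (-p.1/2)/2 * (π * Real.sqrt (p.1 - p.2^2))⁻¹ else 0)) := by
    apply ENNReal.measurable_ofReal.comp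
    apply Measurable.ite
    · exact measurableSet_lt (measurable_snd.pow_const 2) measurable_fst
    · exact ((measurable_fst.neg.div_const 2).exp.div_const 2).mul
        ((measurable_const.mul ((measurable_fst.sub (measurable_snd.pow_const 2)).sqrt)).inv)
    · exact measurable_const
  rw [lintegral_lintegral_swap hmeasU.aemeasurable]
  exact lintegral_congr fun x => mix_integral x
end

section
/- Let k > 0 and μ ∈ (0,1), and let ν denote the PGN(μ,k) distribution and β the Beta(2μ, 2(1−μ)) distribution. Then ν((0,∞)) = β((0,1/2)) and ν((−∞,0)) = β((1/2,1)). In particular, the probabilities ν((0,∞)) and ν((−∞,0)) do not depend on k. -/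
open MeasureTheory Real Set

lemma chiSqDensity_measurable (k : ℝ) : Measurable (chiSqDensity k) := by
  unfold chiSqDensity
  apply Measurable.ite measurableSet_Ioi <;> fun_prop

lemma chiSq_Ioi (k : ℝ) (hk : 0 < k) : chiSqMeasure k (Set.Ioi 0) = 1 := by
  have heq : ∀ v ∈ Set.Ioi (0:ℝ), ENNReal.ofReal (chiSqDensity k v)
      = ProbabilityTheory.gammaPDF (k/2) (1/2) v := by
    intro v hv
    have hv' : (0:ℝ) < v := hv
    rw [ProbabilityTheory.gammaPDF_of_nonneg hv'.le]
    congr 1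
    rw [chiSqDensity, if_pos hv']
    have h2 : (0:ℝ) < 2 ^ (k/2) := Real.rpow_pos_of_pos two_pos _
    have hg : 0 < Real.Gamma (k/2) := Real.Gamma_pos_of_pos (by linarith)
    rw [show ((1:ℝ)/2)^(k/2) = ((2:ℝ) ^ (k/2))⁻¹ by
      rw [one_div, Real.inv_rpow (by norm_num : (0:ℝ) ≤ 2)]]
    rw [show -v/2 = -(1/2*v) by ring]
    field_simp
  rw [chiSqMeasure, withDensity_apply _ measurableSet_Ioi,
    setLIntegral_congr_fun measurableSet_Ioi heq]
  have htot := ProbabilityTheory.lintegral_gammaPDF_eq_one (a := k/2) (r := 1/2)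
    (by linarith) (by norm_num)
  have hrest : ∫⁻ v in (Set.Ioi (0:ℝ))ᶜ, ProbabilityTheory.gammaPDF (k/2) (1/2) v = 0 := by
    rw [compl_Ioi]
    have hne : ∀ᵐ (v:ℝ) ∂volume, v ≠ (0:ℝ) := by
      refine ae_iff.mpr ?_
      simp
    have hz : ∀ᵐ v ∂(volume.restrict (Set.Iic (0:ℝ))),
        ProbabilityTheory.gammaPDF (k/2) (1/2) v = 0 := by
      filter_upwards [ae_restrict_mem measurableSet_Iic, ae_restrict_of_ae hne] with v hv hvne
      exact ProbabilityTheory.gammaPDF_of_neg (lt_of_le_of_ne hv hvne)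
    rw [lintegral_congr_ae hz, lintegral_zero]
  have h1 : (∫⁻ v in Set.Ioi (0:ℝ), ProbabilityTheory.gammaPDF (k/2) (1/2) v)
      + ∫⁻ v in (Set.Ioi (0:ℝ))ᶜ, ProbabilityTheory.gammaPDF (k/2) (1/2) v = 1 := by
    rw [lintegral_add_compl _ measurableSet_Ioi]; exact htot
  rw [hrest, add_zero] at h1
  exact h1

lemma betaMeasure_restrict (μ : ℝ) {s : Set ℝ} (hs : MeasurableSet s) :
    betaMeasure μ s = betaMeasure μ (s ∩ Set.Ioo 0 1) := by
  have hsupp : (fun u => ENNReal.ofReal (betaDensity μ u))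
      = (Set.Ioo (0:ℝ) 1).indicator (fun u => ENNReal.ofReal (betaDensity μ u)) := by
    ext u
    by_cases hu : u ∈ Set.Ioo (0:ℝ) 1
    · rw [Set.indicator_of_mem hu]
    · rw [Set.indicator_of_notMem hu, betaDensity,
        if_neg (by simpa [Set.mem_Ioo] using hu), ENNReal.ofReal_zero]
  rw [betaMeasure, withDensity_apply _ hs, withDensity_apply _ (hs.inter measurableSet_Ioo)]
  nth_rewrite 1 [hsupp]
  rw [setLIntegral_indicator measurableSet_Ioo, Set.inter_comm]

theorem stmt8 (k μ : ℝ) (hk : 0 < k) (hμ : μ ∈ Set.Ioo (0:ℝ) 1) :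
    PGN μ k (Set.Ioi 0) = betaMeasure μ (Set.Ioo 0 (1/2)) ∧
    PGN μ k (Set.Iio 0) = betaMeasure μ (Set.Ioo (1/2) 1) := by
  have hf : Measurable (fun p : ℝ × ℝ => Real.sqrt p.1 * Real.cos (π * p.2)) := by fun_prop
  have hcos : Measurable (fun u : ℝ => Real.cos (π * u)) := by fun_prop
  have hpre1 : (fun p : ℝ × ℝ => Real.sqrt p.1 * Real.cos (π * p.2)) ⁻¹' (Set.Ioi 0)
      = (Set.Ioi 0) ×ˢ {u | 0 < Real.cos (π * u)} := by
    ext ⟨v, u⟩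
    simp only [Set.mem_preimage, Set.mem_Ioi, Set.mem_prod, Set.mem_setOf_eq, mul_pos_iff]
    constructor
    · rintro (⟨h1, h2⟩ | ⟨h1, h2⟩)
      · exact ⟨Real.sqrt_pos.mp h1, h2⟩
      · exact absurd h1 (not_lt.mpr (Real.sqrt_nonneg v))
    · rintro ⟨h1, h2⟩
      exact Or.inl ⟨Real.sqrt_pos.mpr h1, h2⟩
  have hpre2 : (fun p : ℝ × ℝ => Real.sqrt p.1 * Real.cos (π * p.2)) ⁻¹' (Set.Iio 0)
      = (Set.Ioi 0) ×ˢ {u | Real.cos (π * u) < 0} := by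
    ext ⟨v, u⟩
    simp only [Set.mem_preimage, Set.mem_Iio, Set.mem_prod, Set.mem_Ioi, Set.mem_setOf_eq,
      mul_neg_iff]
    constructor
    · rintro (⟨h1, h2⟩ | ⟨h1, h2⟩)
      · exact ⟨Real.sqrt_pos.mp h1, h2⟩
      · exact absurd h1 (not_lt.mpr (Real.sqrt_nonneg v))
    · rintro ⟨h1, h2⟩
      exact Or.inl ⟨Real.sqrt_pos.mpr h1, h2⟩
  have hs1 : MeasurableSet {u : ℝ | 0 < Real.cos (π * u)} :=
    measurableSet_lt measurable_const hcos
  have hs2 : MeasurableSet {u : ℝ | Real.cos (π * u) < 0} :=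
    measurableSet_lt hcos measurable_const
  have hint1 : {u : ℝ | 0 < Real.cos (π * u)} ∩ Set.Ioo 0 1 = Set.Ioo 0 (1/2) := by
    ext u
    simp only [Set.mem_inter_iff, Set.mem_setOf_eq, Set.mem_Ioo]
    constructor
    · rintro ⟨hc, hu0, hu1⟩
      refine ⟨hu0, ?_⟩
      by_contra h
      push_neg at h
      exact absurd hc (not_lt.mpr (Real.cos_nonpos_of_pi_div_two_le_of_le
        (by nlinarith [Real.pi_pos]) (by nlinarith [Real.pi_pos])))
    · rintro ⟨hu0, hu2⟩
      refine ⟨Real.cos_pos_of_mem_Ioo ⟨by nlinarith [Real.pi_pos], by nlinarith [Real.pi_pos]⟩,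
        hu0, by linarith⟩
  have hint2 : {u : ℝ | Real.cos (π * u) < 0} ∩ Set.Ioo 0 1 = Set.Ioo (1/2) 1 := by
    ext u
    simp only [Set.mem_inter_iff, Set.mem_setOf_eq, Set.mem_Ioo]
    constructor
    · rintro ⟨hc, hu0, hu1⟩
      refine ⟨?_, hu1⟩
      by_contra h
      push_neg at h
      exact absurd hc (not_lt.mpr (Real.cos_nonneg_of_mem_Icc
        ⟨by nlinarith [Real.pi_pos], by nlinarith [Real.pi_pos]⟩))
    · rintro ⟨hu2, hu1⟩
      exact ⟨Real.cos_neg_of_pi_div_two_lt_of_lt (by nlinarith [Real.pi_pos])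
        (by nlinarith [Real.pi_pos]), by linarith, hu1⟩
  haveI : SFinite (betaMeasure μ) := by unfold betaMeasure; infer_instance
  constructor
  · rw [PGN, Measure.map_apply hf measurableSet_Ioi, hpre1, Measure.prod_prod,
      chiSq_Ioi k hk, one_mul, betaMeasure_restrict μ hs1, hint1]
  · rw [PGN, Measure.map_apply hf measurableSet_Iio, hpre2, Measure.prod_prod,
      chiSq_Ioi k hk, one_mul, betaMeasure_restrict μ hs2, hint2]
end

section
/- Let k > 0 and μ ∈ (0,1), and let ν denote the PGN(μ,k) distribution. Then ν((0,∞)) > ν((−∞,0)) if and only if μ < 1/2; ν((0,∞)) < ν((−∞,0)) if and only if μ > 1/2; and ν((0,∞)) = ν((−∞,0)) if and only if μ = 1/2. -/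
open MeasureTheory Real Set

/- ## Auxiliary lemmas -/

lemma rpow_cross {u c d : ℝ} (hu : u ∈ Ioo (0:ℝ) (1/2)) (hcd : c < d) :
    u ^ d * (1 - u) ^ c < u ^ c * (1 - u) ^ d := by
  obtain ⟨hu0, hu2⟩ := hu
  have h1u : (0:ℝ) < 1 - u := by linarith
  have key : ∀ z w : ℝ, u ^ z * (1 - u) ^ w = (1 - u) ^ (z + w) * (u / (1 - u)) ^ z := by
    intro z w
    rw [Real.div_rpow hu0.le h1u.le, Real.rpow_add h1u]
    have h2 : (1 - u) ^ z ≠ 0 := (Real.rpow_pos_of_pos h1u z).ne'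
    field_simp
  rw [key d c, key c d, add_comm c d]
  have ht0 : 0 < u / (1 - u) := div_pos hu0 h1u
  have ht1 : u / (1 - u) < 1 := (div_lt_one h1u).2 (by linarith)
  exact mul_lt_mul_of_pos_left
    ((Real.rpow_lt_rpow_left_iff_of_base_lt_one ht0 ht1).2 hcd)
    (Real.rpow_pos_of_pos h1u _)

lemma aux_lt_top {a b B : ℝ} (ha : -1 < a) (hB : 0 < B) :
    ∫⁻ u in Ioo (0:ℝ) (1/2), ENNReal.ofReal (u ^ a * (1 - u) ^ b / B) < ⊤ := by
  have hhalf : 0 < ((1:ℝ)/2) ^ b := Real.rpow_pos_of_pos (by norm_num) b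
  have hint : IntegrableOn (fun u : ℝ => u ^ a * (((1/2 : ℝ) ^ b + 1) / B)) (Ioo 0 (1/2)) := by
    have h1 : IntegrableOn (fun u : ℝ => u ^ a) (Ioc (0:ℝ) (1/2)) := by
      have := (intervalIntegral.intervalIntegrable_rpow' (a := (0:ℝ)) (b := 1/2) ha)
      rwa [intervalIntegrable_iff_integrableOn_Ioc_of_le (by norm_num)] at this
    exact (h1.mono_set Ioo_subset_Ioc_self).mul_const _
  refine lt_of_le_of_lt (setLIntegral_mono ?_ ?_) hint.lintegral_lt_top
  · exact ((measurable_id.pow_const a).mul_const _).ennreal_ofReal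
  · intro u hu
    obtain ⟨hu0, hu2⟩ := hu
    have hb : (1 - u) ^ b ≤ (1/2 : ℝ) ^ b + 1 := by
      rcases le_total 0 b with hb0 | hb0
      · have h1 := Real.rpow_le_one (by linarith : (0:ℝ) ≤ 1 - u)
          (by linarith : (1:ℝ) - u ≤ 1) hb0
        linarith
      · have h1 := Real.rpow_le_rpow_of_nonpos (by norm_num : (0:ℝ) < 1/2)
          (by linarith : (1:ℝ)/2 ≤ 1 - u) hb0
        linarith
    apply ENNReal.ofReal_le_ofReal
    rw [mul_div_assoc]
    exact mul_le_mul_of_nonneg_left ((div_le_div_iff_of_pos_right hB).2 hb) (Real.rpow_nonneg hu0.le a)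

lemma realBeta_pos {μ : ℝ} (hμ : μ ∈ Ioo (0:ℝ) 1) : 0 < realBeta (2 * μ) (2 * (1 - μ)) := by
  obtain ⟨h0, h1⟩ := hμ
  have g1 := Real.Gamma_pos_of_pos (by linarith : 0 < 2 * μ)
  have g2 := Real.Gamma_pos_of_pos (by linarith : 0 < 2 * (1 - μ))
  have g3 := Real.Gamma_pos_of_pos (by linarith : 0 < 2 * μ + 2 * (1 - μ))
  exact div_pos (mul_pos g1 g2) g3

lemma betaDensity_measurable_s9 (μ : ℝ) :
    Measurable fun u : ℝ => ENNReal.ofReal (betaDensity μ u) := by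
  apply Measurable.ennreal_ofReal
  unfold betaDensity
  have hs : MeasurableSet {u : ℝ | 0 < u ∧ u < 1} := by
    have : {u : ℝ | 0 < u ∧ u < 1} = Ioo 0 1 := rfl
    rw [this]; exact measurableSet_Ioo
  exact Measurable.ite hs
    (((measurable_id.pow_const _).mul
      ((measurable_const.sub measurable_id).pow_const _)).div_const _) measurable_const

lemma chiSqDensity_measurable_s9 (k : ℝ) :
    Measurable fun v : ℝ => ENNReal.ofReal (chiSqDensity k v) := by
  apply Measurable.ennreal_ofReal
  unfold chiSqDensity
  have hs : MeasurableSet {v : ℝ | 0 < v} := measurableSet_Ioi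
  exact Measurable.ite hs
    (((measurable_id.pow_const _).mul
      ((measurable_id.neg.div_const 2).exp)).div_const _) measurable_const

lemma chiSq_Iic_s9 (k : ℝ) : chiSqMeasure k (Iic 0) = 0 := by
  rw [chiSqMeasure, withDensity_apply _ measurableSet_Iic]
  have : ∫⁻ x in Iic (0:ℝ), ENNReal.ofReal (chiSqDensity k x) =
      ∫⁻ _ in Iic (0:ℝ), (0 : ENNReal) :=
    setLIntegral_congr_fun measurableSet_Iic
      (fun x (hx : x ∈ Iic (0:ℝ)) => by
        simp [chiSqDensity, not_lt.2 (mem_Iic.1 hx)])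
  rw [this, lintegral_zero]

lemma beta_compl (μ : ℝ) : betaMeasure μ ((Ioo (0:ℝ) 1)ᶜ) = 0 := by
  rw [betaMeasure, withDensity_apply _ measurableSet_Ioo.compl]
  have : ∫⁻ x in (Ioo (0:ℝ) 1)ᶜ, ENNReal.ofReal (betaDensity μ x) =
      ∫⁻ _ in (Ioo (0:ℝ) 1)ᶜ, (0 : ENNReal) :=
    setLIntegral_congr_fun measurableSet_Ioo.compl
      (fun x hx => by
        have hnot : ¬(0 < x ∧ x < 1) := fun h => hx (mem_Ioo.2 h)
        simp [betaDensity, hnot])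
  rw [this, lintegral_zero]

instance (μ : ℝ) : SFinite (betaMeasure μ) := by
  unfold betaMeasure; infer_instance

instance (k : ℝ) : SFinite (chiSqMeasure k) := by
  unfold chiSqMeasure; infer_instance

lemma chiSq_lt_top {k : ℝ} (hk : 0 < k) : chiSqMeasure k (Ioi 0) < ⊤ := by
  rw [chiSqMeasure, withDensity_apply _ measurableSet_Ioi]
  set C : ℝ := (2 : ℝ) ^ (k / 2) * Real.Gamma (k / 2) with hC
  have hint : IntegrableOn (fun v : ℝ => v ^ (k / 2 - 1) * Real.exp (-v / 2) / C) (Ioi 0) := by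
    have h1 : IntegrableOn (fun v : ℝ => v ^ (k / 2 - 1) * Real.exp (-(1/2) * v ^ (1:ℝ)))
        (Ioi 0) :=
      integrableOn_rpow_mul_exp_neg_mul_rpow (by linarith) (by norm_num) (by norm_num)
    refine (h1.congr_fun (fun v hv => ?_) measurableSet_Ioi).div_const C
    rw [Real.rpow_one]; ring_nf
  refine lt_of_le_of_lt (le_of_eq (setLIntegral_congr_fun measurableSet_Ioi
    (fun v (hv : v ∈ Ioi (0:ℝ)) => by
      rw [chiSqDensity, if_pos (mem_Ioi.1 hv)]))) hint.lintegral_lt_top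

lemma chiSq_pos {k : ℝ} (hk : 0 < k) : 0 < chiSqMeasure k (Ioi 0) := by
  rw [chiSqMeasure, withDensity_apply _ measurableSet_Ioi,
    lintegral_pos_iff_support (chiSqDensity_measurable_s9 k)]
  have hsub : Ioi (0:ℝ) ⊆ Function.support fun v => ENNReal.ofReal (chiSqDensity k v) := by
    intro v hv
    have hv0 : (0:ℝ) < v := hv
    have hC : 0 < (2 : ℝ) ^ (k / 2) * Real.Gamma (k / 2) :=
      mul_pos (Real.rpow_pos_of_pos two_pos _) (Real.Gamma_pos_of_pos (by linarith))
    have : 0 < chiSqDensity k v := by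
      rw [chiSqDensity, if_pos hv0]
      exact div_pos (mul_pos (Real.rpow_pos_of_pos hv0 _) (Real.exp_pos _)) hC
    simp only [Function.mem_support, ne_eq, ENNReal.ofReal_eq_zero, not_le]
    exact this
  calc (0:ENNReal) < ⊤ := by simp
    _ = (volume.restrict (Ioi (0:ℝ))) (Ioi 0) := by
        rw [Measure.restrict_apply measurableSet_Ioi, inter_self, Real.volume_Ioi]
    _ ≤ _ := measure_mono hsub

lemma beta_A {μ : ℝ} (hμ : μ ∈ Ioo (0:ℝ) 1) :
    betaMeasure μ (Ioo 0 (1/2)) = ∫⁻ u in Ioo (0:ℝ) (1/2),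
      ENNReal.ofReal (u ^ (2 * μ - 1) * (1 - u) ^ (1 - 2 * μ)
        / realBeta (2 * μ) (2 * (1 - μ))) := by
  rw [betaMeasure, withDensity_apply _ measurableSet_Ioo]
  exact setLIntegral_congr_fun measurableSet_Ioo (fun u hu => by
    rw [betaDensity, if_pos ⟨hu.1, by linarith [hu.2]⟩])

lemma beta_B {μ : ℝ} (hμ : μ ∈ Ioo (0:ℝ) 1) :
    betaMeasure μ (Ioo (1/2) 1) = ∫⁻ u in Ioo (0:ℝ) (1/2),
      ENNReal.ofReal (u ^ (1 - 2 * μ) * (1 - u) ^ (2 * μ - 1)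
        / realBeta (2 * μ) (2 * (1 - μ))) := by
  rw [betaMeasure, withDensity_apply _ measurableSet_Ioo]
  have hmp : MeasurePreserving (fun x : ℝ => 1 - x) volume volume :=
    Measure.measurePreserving_sub_left volume 1
  have hemb : MeasurableEmbedding (fun x : ℝ => 1 - x) :=
    (Homeomorph.subLeft (1:ℝ)).measurableEmbedding
  rw [← hmp.setLIntegral_comp_preimage_emb hemb
    (fun u => ENNReal.ofReal (betaDensity μ u)) (Ioo (1/2) 1)]
  have hpre : (fun x : ℝ => 1 - x) ⁻¹' Ioo (1/2) 1 = Ioo 0 (1/2) := by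
    ext x
    simp only [mem_preimage, mem_Ioo]
    constructor <;> rintro ⟨h1, h2⟩ <;> constructor <;> linarith
  rw [hpre]
  refine setLIntegral_congr_fun measurableSet_Ioo (fun u hu => ?_)
  obtain ⟨hu0, hu2⟩ := hu
  rw [betaDensity, if_pos ⟨by linarith, by linarith⟩, sub_sub_cancel, mul_comm]

lemma beta_pos_half {μ : ℝ} (hμ : μ ∈ Ioo (0:ℝ) 1) :
    0 < betaMeasure μ (Ioo 0 (1/2)) := by
  rw [betaMeasure, withDensity_apply _ measurableSet_Ioo,
    lintegral_pos_iff_support (betaDensity_measurable_s9 μ)]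
  have hsub : Ioo (0:ℝ) (1/2) ⊆
      Function.support fun u => ENNReal.ofReal (betaDensity μ u) := by
    intro u hu
    obtain ⟨hu0, hu2⟩ := hu
    have : 0 < betaDensity μ u := by
      rw [betaDensity, if_pos ⟨hu0, by linarith⟩]
      exact div_pos (mul_pos (Real.rpow_pos_of_pos hu0 _)
        (Real.rpow_pos_of_pos (by linarith) _)) (realBeta_pos hμ)
    simp only [Function.mem_support, ne_eq, ENNReal.ofReal_eq_zero, not_le]
    exact this
  calc (0:ENNReal) < ENNReal.ofReal (1/2) := by norm_num
    _ = (volume.restrict (Ioo (0:ℝ) (1/2))) (Ioo 0 (1/2)) := by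
        rw [Measure.restrict_apply measurableSet_Ioo, inter_self, Real.volume_Ioo]
        norm_num
    _ ≤ _ := measure_mono hsub

theorem stmt9 (k μ : ℝ) (hk : 0 < k) (hμ : μ ∈ Set.Ioo (0:ℝ) 1) :
    (PGN μ k (Set.Iio 0) < PGN μ k (Set.Ioi 0) ↔ μ < 1/2) ∧
    (PGN μ k (Set.Ioi 0) < PGN μ k (Set.Iio 0) ↔ 1/2 < μ) ∧
    (PGN μ k (Set.Ioi 0) = PGN μ k (Set.Iio 0) ↔ μ = 1/2) := by
  obtain ⟨hμ0, hμ1⟩ := hμ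
  have hf : Measurable fun p : ℝ × ℝ => Real.sqrt p.1 * Real.cos (π * p.2) :=
    ((Real.continuous_sqrt.comp continuous_fst).mul
      (Real.continuous_cos.comp (continuous_const.mul continuous_snd))).measurable
  set D : ℝ := realBeta (2 * μ) (2 * (1 - μ)) with hD
  have hDpos : 0 < D := realBeta_pos ⟨hμ0, hμ1⟩
  -- null set outside the box
  have hNull : ((chiSqMeasure k).prod (betaMeasure μ)) ((Ioi (0:ℝ) ×ˢ Ioo (0:ℝ) 1)ᶜ) = 0 := by
    have hsub : (Ioi (0:ℝ) ×ˢ Ioo (0:ℝ) 1)ᶜ ⊆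
        (Iic (0:ℝ) ×ˢ (univ : Set ℝ)) ∪ ((univ : Set ℝ) ×ˢ (Ioo (0:ℝ) 1)ᶜ) := by
      rintro ⟨v, u⟩ hp
      simp only [mem_compl_iff, mem_prod, mem_Ioi, mem_Ioo, not_and_or, not_lt] at hp
      rcases hp with h | h
      · exact Or.inl ⟨mem_Iic.2 h, mem_univ _⟩
      · refine Or.inr ⟨mem_univ _, fun hmem => ?_⟩
        rcases h with h | h
        · exact absurd (mem_Ioo.1 hmem).1 (not_lt.2 h)
        · exact absurd (mem_Ioo.1 hmem).2 (not_lt.2 h)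
    refine measure_mono_null hsub (measure_union_null ?_ ?_)
    · rw [Measure.prod_prod, chiSq_Iic_s9, zero_mul]
    · rw [Measure.prod_prod, beta_compl, mul_zero]
  -- preimages intersected with the box
  have hbox_pos : (fun p : ℝ × ℝ => Real.sqrt p.1 * Real.cos (π * p.2)) ⁻¹' (Ioi 0)
      ∩ (Ioi (0:ℝ) ×ˢ Ioo (0:ℝ) 1) = Ioi (0:ℝ) ×ˢ Ioo (0:ℝ) (1/2) := by
    ext ⟨v, u⟩
    simp only [mem_inter_iff, mem_preimage, mem_prod, mem_Ioi, mem_Ioo]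
    constructor
    · rintro ⟨hvu, hv, hu0, hu1⟩
      refine ⟨hv, hu0, ?_⟩
      by_contra hhalf
      push_neg at hhalf
      have hcos : Real.cos (π * u) ≤ 0 :=
        Real.cos_nonpos_of_pi_div_two_le_of_le (by nlinarith [Real.pi_pos])
          (by nlinarith [Real.pi_pos])
      nlinarith [Real.sqrt_pos.2 hv]
    · rintro ⟨hv, hu0, hu2⟩
      have hcos : 0 < Real.cos (π * u) :=
        Real.cos_pos_of_mem_Ioo ⟨by nlinarith [Real.pi_pos], by nlinarith [Real.pi_pos]⟩
      exact ⟨mul_pos (Real.sqrt_pos.2 hv) hcos, hv, hu0, by linarith⟩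
  have hbox_neg : (fun p : ℝ × ℝ => Real.sqrt p.1 * Real.cos (π * p.2)) ⁻¹' (Iio 0)
      ∩ (Ioi (0:ℝ) ×ˢ Ioo (0:ℝ) 1) = Ioi (0:ℝ) ×ˢ Ioo (1/2 : ℝ) 1 := by
    ext ⟨v, u⟩
    simp only [mem_inter_iff, mem_preimage, mem_prod, mem_Ioi, mem_Iio, mem_Ioo]
    constructor
    · rintro ⟨hvu, hv, hu0, hu1⟩
      refine ⟨hv, ?_, hu1⟩
      by_contra hhalf
      push_neg at hhalf
      have hcos : 0 ≤ Real.cos (π * u) :=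
        Real.cos_nonneg_of_mem_Icc ⟨by nlinarith [Real.pi_pos], by nlinarith [Real.pi_pos]⟩
      nlinarith [Real.sqrt_pos.2 hv]
    · rintro ⟨hv, hu2, hu1⟩
      have hcos : Real.cos (π * u) < 0 :=
        Real.cos_neg_of_pi_div_two_lt_of_lt (by nlinarith [Real.pi_pos])
          (by nlinarith [Real.pi_pos])
      exact ⟨mul_neg_of_pos_of_neg (Real.sqrt_pos.2 hv) hcos, hv, by linarith, hu1⟩
  -- PGN values
  have hIoi : PGN μ k (Ioi 0) = chiSqMeasure k (Ioi 0) * betaMeasure μ (Ioo 0 (1/2)) := by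
    rw [PGN, Measure.map_apply hf measurableSet_Ioi, ← measure_inter_conull hNull,
      hbox_pos, Measure.prod_prod]
  have hIio : PGN μ k (Iio 0) = chiSqMeasure k (Ioi 0) * betaMeasure μ (Ioo (1/2) 1) := by
    rw [PGN, Measure.map_apply hf measurableSet_Iio, ← measure_inter_conull hNull,
      hbox_neg, Measure.prod_prod]
  set c := chiSqMeasure k (Ioi 0) with hc
  have hc0 : c ≠ 0 := (chiSq_pos hk).ne'
  have hctop : c ≠ ⊤ := (chiSq_lt_top hk).ne
  set A := betaMeasure μ (Ioo (0:ℝ) (1/2)) with hAdef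
  set B := betaMeasure μ (Ioo (1/2:ℝ) 1) with hBdef
  have hA := beta_A ⟨hμ0, hμ1⟩
  have hB := beta_B ⟨hμ0, hμ1⟩
  have hAfin : A ≠ ⊤ := by
    rw [hAdef, hA]; exact (aux_lt_top (by linarith) hDpos).ne
  have hBfin : B ≠ ⊤ := by
    rw [hBdef, hB]; exact (aux_lt_top (by linarith) hDpos).ne
  have hres0 : volume.restrict (Ioo (0:ℝ) (1/2)) ≠ 0 := by
    rw [Ne, Measure.restrict_eq_zero, Real.volume_Ioo]
    norm_num
  have hmeas : ∀ e f : ℝ, Measurable fun u : ℝ =>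
      ENNReal.ofReal (u ^ e * (1 - u) ^ f / D) := fun e f =>
    (((measurable_id.pow_const e).mul
      ((measurable_const.sub measurable_id).pow_const f)).div_const D).ennreal_ofReal
  have hcompare : ∀ {m : ℝ}, m ∈ Ioo (0:ℝ) 1 → m < 1/2 →
      betaMeasure m (Ioo (1/2:ℝ) 1) < betaMeasure m (Ioo (0:ℝ) (1/2)) := by
    intro m hm hm2
    have hDm : 0 < realBeta (2 * m) (2 * (1 - m)) := realBeta_pos hm
    rw [beta_A hm, beta_B hm]
    refine lintegral_strict_mono hres0 ?_ ?_ ?_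
    · exact ((((measurable_id.pow_const _).mul
        ((measurable_const.sub measurable_id).pow_const _)).div_const _).ennreal_ofReal).aemeasurable
    · exact (aux_lt_top (by linarith [hm.2]) hDm).ne
    · rw [ae_restrict_iff' measurableSet_Ioo]
      refine ae_of_all _ fun u hu => ?_
      have hlt : u ^ (1 - 2 * m) * (1 - u) ^ (2 * m - 1)
          < u ^ (2 * m - 1) * (1 - u) ^ (1 - 2 * m) :=
        rpow_cross hu (by linarith)
      have hposR : 0 < u ^ (2 * m - 1) * (1 - u) ^ (1 - 2 * m)
          / realBeta (2 * m) (2 * (1 - m)) := by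
        have h1u : (0:ℝ) < 1 - u := by linarith [hu.2]
        exact div_pos (mul_pos (Real.rpow_pos_of_pos hu.1 _)
          (Real.rpow_pos_of_pos h1u _)) hDm
      exact (ENNReal.ofReal_lt_ofReal_iff hposR).2 ((div_lt_div_iff_of_pos_right hDm).2 hlt)
  rcases lt_trichotomy μ (1/2) with h | h | h
  · have hBA : PGN μ k (Iio 0) < PGN μ k (Ioi 0) := by
      rw [hIoi, hIio]
      exact (ENNReal.mul_lt_mul_iff_right hc0 hctop).2 (hcompare ⟨hμ0, hμ1⟩ h)
    exact ⟨⟨fun _ => h, fun _ => hBA⟩,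
      ⟨fun habs => (lt_asymm hBA habs).elim, fun hm => absurd h (not_lt.2 hm.le)⟩,
      ⟨fun heq => (hBA.ne' heq).elim, fun hm => absurd h (by rw [hm]; exact lt_irrefl _)⟩⟩
  · have hEq : PGN μ k (Ioi 0) = PGN μ k (Iio 0) := by
      rw [hIoi, hIio]
      congr 1
      rw [hAdef, hBdef, hA, hB, h]
      norm_num
    rw [hEq, h]
    norm_num
  · have hAB : PGN μ k (Ioi 0) < PGN μ k (Iio 0) := by
      rw [hIoi, hIio]
      refine (ENNReal.mul_lt_mul_iff_right hc0 hctop).2 ?_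
      rw [hAdef, hBdef, hA, hB]
      refine lintegral_strict_mono hres0 (hmeas _ _).aemeasurable
        ((aux_lt_top (by linarith) hDpos).ne) ?_
      rw [ae_restrict_iff' measurableSet_Ioo]
      refine ae_of_all _ fun u hu => ?_
      have hlt : u ^ (2 * μ - 1) * (1 - u) ^ (1 - 2 * μ)
          < u ^ (1 - 2 * μ) * (1 - u) ^ (2 * μ - 1) :=
        rpow_cross hu (by linarith)
      have hposR : 0 < u ^ (1 - 2 * μ) * (1 - u) ^ (2 * μ - 1) / D := by
        have h1u : (0:ℝ) < 1 - u := by linarith [hu.2]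
        exact div_pos (mul_pos (Real.rpow_pos_of_pos hu.1 _)
          (Real.rpow_pos_of_pos h1u _)) hDpos
      exact (ENNReal.ofReal_lt_ofReal_iff hposR).2 ((div_lt_div_iff_of_pos_right hDpos).2 hlt)
    exact ⟨⟨fun habs => (lt_asymm hAB habs).elim, fun hm => absurd h (not_lt.2 hm.le)⟩,
      ⟨fun _ => h, fun _ => hAB⟩,
      ⟨fun heq => (hAB.ne heq).elim, fun hm => absurd h (by rw [hm]; exact lt_irrefl _)⟩⟩
end
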